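/- The language L(H_k^sign) of words generated by the signed Hammersley process of order k is the intersection of two deterministic one-counter languages. -/

import Mathlib

/-- A letter of the alphabet `Γ_k`: a value together with a polarity
(`true` = positive `⁺`, `false` = negative `⁻`). -/
abbrev SLetter := ℕ × Bool

/-- Decrement the first (leftmost) letter of polarity `s` with nonzero value. -/
def decFirst (s : Bool) : List SLetter → List SLetter
  | [] => []
  | (v, t) :: rest =>
      if t = s ∧ v ≠ 0 then (v - 1, t) :: rest else (v, t) :: decFirst s rest

/-- One step of the signed Hammersley process of order `k`:
insert a letter `(k, s)` (i.e. `k⁺` or `k⁻`) at an arbitrary position, and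
decrement the closest nonzero letter of opposite polarity to its right (if any). -/
def HStep (k : ℕ) (w w' : List SLetter) : Prop :=
  ∃ (u v : List SLetter) (s : Bool),
    w = u ++ v ∧ w' = u ++ (k, s) :: decFirst (!s) v

/-- Words generated by the signed Hammersley process of order `k`. -/
inductive HGen (k : ℕ) : List SLetter → Prop
  | nil : HGen k []
  | step {w w' : List SLetter} : HGen k w → HStep k w w' → HGen k w'

/-- A deterministic one-counter automaton over alphabet `α`: a deterministic
pushdown automaton whose stack alphabet consists of a single symbol plus a
bottom-of-stack marker, equivalently a finite-state machine with a counter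
over `ℕ` whose transitions may depend on whether the counter is zero and
change the counter by a fixed integer amount (the machine rejects if the
counter would become negative). -/
structure OCA (α : Type) where
  Q : Type
  fin : Fintype Q
  init : Q
  accept : Q → Bool
  δ : Q → α → Bool → Q × ℤ

/-- One step of a deterministic one-counter automaton on configuration
`some (state, counter)`; `none` is the rejecting sink. -/
def OCA.stepFn {α : Type} (M : OCA α) :
    Option (M.Q × ℕ) → α → Option (M.Q × ℕ)
  | none, _ => none
  | some (q, c), a =>
      let t := M.δ q a (decide (c = 0))
      if 0 ≤ (c : ℤ) + t.2 then some (t.1, ((c : ℤ) + t.2).toNat) else none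

/-- The language accepted by a deterministic one-counter automaton. -/
def OCA.lang {α : Type} (M : OCA α) : Set (List α) :=
  { w | ∃ (q : M.Q) (c : ℕ),
      w.foldl M.stepFn (some (M.init, 0)) = some (q, c) ∧ M.accept q = true }

/-- `L` is a deterministic one-counter language. -/
def IsDOCL {α : Type} (L : Set (List α)) : Prop := ∃ M : OCA α, M.lang = L

/-! ### auxiliary development -/

/-- deficit contribution of one letter for polarity `s`. -/
def dval (k : ℕ) (s : Bool) (x : SLetter) : ℕ := if x.2 = s then k - x.1 else 0

/-- count contribution of one letter for polarity `s`. -/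
def cval (s : Bool) (x : SLetter) : ℕ := if x.2 = s then 1 else 0

/-- total deficit of polarity-`s` letters. -/
def defc (k : ℕ) (s : Bool) (w : List SLetter) : ℕ := (w.map (dval k s)).sum

/-- number of polarity-`s` letters. -/
def cnt (s : Bool) (w : List SLetter) : ℕ := (w.map (cval s)).sum

@[simp] lemma defc_nil (k s) : defc k s [] = 0 := rfl
@[simp] lemma cnt_nil (s) : cnt s [] = 0 := rfl
@[simp] lemma defc_cons (k s x w) : defc k s (x :: w) = dval k s x + defc k s w := by
  simp [defc]
@[simp] lemma cnt_cons (s x w) : cnt s (x :: w) = cval s x + cnt s w := by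
  simp [cnt]
@[simp] lemma defc_append (k s u v) : defc k s (u ++ v) = defc k s u + defc k s v := by
  simp [defc]
@[simp] lemma cnt_append (s u v) : cnt s (u ++ v) = cnt s u + cnt s v := by
  simp [cnt]

/-- the combinatorial characterization, for one polarity. -/
def Ok (k : ℕ) (s : Bool) (w : List SLetter) : Prop :=
  (∀ x ∈ w, x.1 ≤ k) ∧ ∀ p q : List SLetter, w = p ++ q → defc k s p ≤ cnt (!s) p

lemma ok_nil (k s) : Ok k s [] := by
  refine ⟨by simp, ?_⟩
  rintro p q h
  obtain ⟨rfl, rfl⟩ := List.append_eq_nil_iff.mp h.symm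
  simp

/-- The one-counter automaton checking `Ok k s`. -/
def M (k : ℕ) (s : Bool) : OCA SLetter where
  Q := Bool
  fin := inferInstance
  init := true
  accept := id
  δ := fun q a _ =>
    match q with
    | false => (false, 0)
    | true =>
        if k < a.1 then (false, 0)
        else if a.2 = s then (true, (a.1 : ℤ) - (k : ℤ)) else (true, 1)

lemma foldl_none (k s) (w : List SLetter) :
    w.foldl (M k s).stepFn none = none := by
  induction w with
  | nil => rfl
  | cons x w ih => simpa [OCA.stepFn] using ih

lemma foldl_false (k s) (w : List SLetter) (c : ℕ) :
    w.foldl (M k s).stepFn (some (false, c)) = some (false, c) := by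
  induction w with
  | nil => rfl
  | cons x w ih =>
      have h : (M k s).stepFn (some (false, c)) x = some (false, c) := by
        simp [OCA.stepFn, M]
      erw [List.foldl_cons, h, ih]

lemma splits_cons {α : Type*} {x : α} {w : List α} {P : List α → Prop} :
    (∀ p q : List α, x :: w = p ++ q → P p) ↔
      (P [] ∧ ∀ p q : List α, w = p ++ q → P (x :: p)) := by
  constructor
  · intro h
    exact ⟨h [] (x :: w) rfl, fun p q e => h (x :: p) q (by rw [e]; rfl)⟩
  · rintro ⟨h0, h⟩ p q e
    cases p with
    | nil => exact h0
    | cons y p' =>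
        rw [List.cons_append] at e
        injection e with e1 e2
        subst e1
        exact h p' q e2

lemma run_iff (k : ℕ) (s : Bool) :
    ∀ (w : List SLetter) (m : ℕ),
      (∃ c, w.foldl (M k s).stepFn (some (true, m)) = some (true, c)) ↔
        ((∀ x ∈ w, x.1 ≤ k) ∧
          ∀ p q : List SLetter, w = p ++ q → defc k s p ≤ m + cnt (!s) p) := by
  intro w
  induction w with
  | nil =>
      intro m
      simp only [List.foldl_nil]
      constructor
      · intro _
        refine ⟨by simp, ?_⟩
        rintro p q h
        obtain ⟨rfl, rfl⟩ := List.append_eq_nil_iff.mp h.symm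
        simp
      · intro _; exact ⟨m, rfl⟩
  | cons x w ih =>
      intro m
      rw [List.foldl_cons]
      by_cases hk : k < x.1
      · have hstep : (M k s).stepFn (some (true, m)) x = some (false, m) := by
          simp [OCA.stepFn, M, hk]
        erw [hstep, foldl_false]
        change (∃ c : ℕ, some ((false, m) : Bool × ℕ) = some (true, c)) ↔ _
        simp only [Option.some.injEq, Prod.mk.injEq]
        constructor
        · rintro ⟨c, hc, -⟩; exact absurd hc (by simp)
        · rintro ⟨hmem, -⟩
          exact absurd (hmem x (by simp)) (by omega)
      · push_neg at hk
        by_cases hx : x.2 = s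
        · by_cases hm : k - x.1 ≤ m
          · have hstep : (M k s).stepFn (some (true, m)) x
                = some (true, m - (k - x.1)) := by
              simp only [OCA.stepFn, M, if_neg (not_lt.mpr hk), if_pos hx]
              rw [if_pos (by omega)]
              congr 1
              congr 1
              omega
            erw [hstep, ih]
            rw [splits_cons (P := fun p => defc k s p ≤ m + cnt (!s) p)]
            have hcval : cval (!s) x = 0 := by simp [cval, hx]
            have hdval : dval k s x = k - x.1 := by simp [dval, hx]
            constructor
            · rintro ⟨hmem, hpre⟩
              refine ⟨?_, by simp, ?_⟩
              · intro y hy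
                rcases List.mem_cons.mp hy with rfl | hy
                · exact hk
                · exact hmem y hy
              · intro p q e
                have := hpre p q e
                simp only [defc_cons, cnt_cons, hdval, hcval]
                omega
            · rintro ⟨hmem, -, hpre⟩
              refine ⟨fun y hy => hmem y (List.mem_cons_of_mem _ hy), ?_⟩
              intro p q e
              have := hpre p q e
              simp only [defc_cons, cnt_cons, hdval, hcval] at this
              omega
          · have hstep : (M k s).stepFn (some (true, m)) x = none := by
              simp only [OCA.stepFn, M, if_neg (not_lt.mpr hk), if_pos hx]
              rw [if_neg (by omega)]
            rw [hstep, foldl_none]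
            constructor
            · rintro ⟨c, hc⟩
              exact absurd hc (by simp)
            · rintro ⟨hmem, hpre⟩
              exfalso
              have := hpre [x] w rfl
              have hd : defc k s [x] = k - x.1 := by simp [dval, hx]
              have hc : cnt (!s) [x] = 0 := by simp [cval, hx]
              rw [hd, hc] at this
              omega
        · have hstep : (M k s).stepFn (some (true, m)) x = some (true, m + 1) := by
            simp only [OCA.stepFn, M, if_neg (not_lt.mpr hk), if_neg hx]
            rw [if_pos (by omega)]
            congr 2
          erw [hstep, ih]
          rw [splits_cons (P := fun p => defc k s p ≤ m + cnt (!s) p)]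
          have hx' : x.2 = !s := by
            cases hb : x.2 <;> cases s <;> simp_all
          have hcval : cval (!s) x = 1 := by simp [cval, hx']
          have hdval : dval k s x = 0 := by simp [dval, hx, hx']
          constructor
          · rintro ⟨hmem, hpre⟩
            refine ⟨?_, by simp, ?_⟩
            · intro y hy
              rcases List.mem_cons.mp hy with rfl | hy
              · exact hk
              · exact hmem y hy
            · intro p q e
              have := hpre p q e
              simp only [defc_cons, cnt_cons, hdval, hcval]
              omega
          · rintro ⟨hmem, -, hpre⟩
            refine ⟨fun y hy => hmem y (List.mem_cons_of_mem _ hy), ?_⟩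
            intro p q e
            have := hpre p q e
            simp only [defc_cons, cnt_cons, hdval, hcval] at this
            omega

lemma lang_eq (k : ℕ) (s : Bool) : (M k s).lang = { w | Ok k s w } := by
  ext w
  simp only [OCA.lang, Set.mem_setOf_eq, Ok]
  constructor
  · rintro ⟨q, c, hfold, hacc⟩
    have hq : q = true := hacc
    subst hq
    have := (run_iff k s w 0).mp ⟨c, by simpa [M] using hfold⟩
    simpa using this
  · intro h
    obtain ⟨c, hc⟩ := (run_iff k s w 0).mpr (by simpa using h)
    exact ⟨true, c, by simpa [M] using hc, rfl⟩

/-! ### decFirst lemmas -/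

lemma decFirst_eq_self (s : Bool) (v : List SLetter)
    (h : ∀ x ∈ v, x.2 = s → x.1 = 0) : decFirst s v = v := by
  induction v with
  | nil => rfl
  | cons x v ih =>
      obtain ⟨n, t⟩ := x
      have hcond : ¬(t = s ∧ n ≠ 0) := by
        rintro ⟨rfl, hn⟩
        exact hn (h (n, t) (by simp) rfl)
      simp only [decFirst, if_neg hcond]
      rw [ih (fun y hy => h y (List.mem_cons_of_mem _ hy))]

lemma decFirst_spec (s : Bool) (v : List SLetter) :
    decFirst s v = v ∨
      ∃ a c b, c ≠ 0 ∧ v = a ++ (c, s) :: b ∧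
        decFirst s v = a ++ (c - 1, s) :: b := by
  induction v with
  | nil => left; rfl
  | cons x v ih =>
      obtain ⟨n, t⟩ := x
      by_cases hcond : t = s ∧ n ≠ 0
      · right
        obtain ⟨rfl, hn⟩ := hcond
        exact ⟨[], n, v, hn, rfl, by simp [decFirst, hn]⟩
      · rcases ih with hdf | ⟨a, c, b, hc, hv, hdf⟩
        · left
          simp only [decFirst, if_neg hcond]
          rw [hdf]
        · right
          refine ⟨(n, t) :: a, c, b, hc, by rw [hv, List.cons_append], ?_⟩
          simp only [decFirst, if_neg hcond]
          rw [hdf, List.cons_append]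

lemma decFirst_append (s : Bool) (a b : List SLetter)
    (h : ∀ x ∈ a, ¬(x.2 = s ∧ x.1 ≠ 0)) :
    decFirst s (a ++ b) = a ++ decFirst s b := by
  induction a with
  | nil => rfl
  | cons x a ih =>
      obtain ⟨n, t⟩ := x
      have hcond : ¬(t = s ∧ n ≠ 0) := h (n, t) (by simp)
      simp only [List.cons_append, decFirst, if_neg hcond]
      rw [ih (fun y hy => h y (List.mem_cons_of_mem _ hy))]

/-! ### soundness lemmas -/

lemma split_mid {α : Type*} {u v p q : List α} {y : α} (h : p ++ q = u ++ y :: v) :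
    (∃ r, u = p ++ r) ∨ (∃ r, p = u ++ y :: r ∧ v = r ++ q) := by
  rcases List.append_eq_append_iff.mp h with ⟨a', h1, h2⟩ | ⟨c', h1, h2⟩
  · exact Or.inl ⟨a', h1⟩
  · cases c' with
    | nil => exact Or.inl ⟨[], by simp [h1]⟩
    | cons z c'' =>
        rw [List.cons_append] at h2
        injection h2 with h3 h4
        exact Or.inr ⟨c'', by rw [h1, h3], h4⟩

lemma defc_zero_of_pol (k : ℕ) (t : Bool) (r : List SLetter)
    (h : ∀ x ∈ r, x.2 ≠ t) : defc k t r = 0 := by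
  induction r with
  | nil => rfl
  | cons x r ih =>
      simp only [defc_cons, dval, if_neg (h x (by simp))]
      simpa using ih (fun y hy => h y (List.mem_cons_of_mem _ hy))

lemma ok_insert (k : ℕ) (t s : Bool) (u v : List SLetter)
    (h : Ok k t (u ++ v)) : Ok k t (u ++ (k, s) :: v) := by
  obtain ⟨hm, hp⟩ := h
  constructor
  · intro x hx
    rcases List.mem_append.mp hx with hx | hx
    · exact hm x (List.mem_append_left _ hx)
    · rcases List.mem_cons.mp hx with rfl | hx
      · exact le_refl k
      · exact hm x (List.mem_append_right _ hx)
  · intro p q e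
    rcases split_mid e.symm with ⟨r, hu⟩ | ⟨r, hpp, hvv⟩
    · exact hp p (r ++ v) (by rw [hu, List.append_assoc])
    · subst hpp
      have hold := hp (u ++ r) (q) (by rw [hvv, List.append_assoc])
      have hd : dval k t (k, s) = 0 := by simp [dval, Nat.sub_self]
      simp only [defc_append, cnt_append, defc_cons, cnt_cons, hd] at hold ⊢
      omega

lemma ok_insert_dec (k : ℕ) (t s : Bool) (u a b : List SLetter) (c : ℕ) (hc : c ≠ 0)
    (h : Ok k t (u ++ (a ++ (c, !s) :: b))) :
    Ok k t (u ++ (k, s) :: (a ++ (c - 1, !s) :: b)) := by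
  obtain ⟨hm, hp⟩ := h
  constructor
  · intro x hx
    have hck : c ≤ k := hm (c, !s) (by simp)
    rcases List.mem_append.mp hx with hx | hx
    · exact hm x (List.mem_append_left _ hx)
    · rcases List.mem_cons.mp hx with rfl | hx
      · exact le_refl k
      · rcases List.mem_append.mp hx with hx | hx
        · exact hm x (List.mem_append_right _ (List.mem_append_left _ hx))
        · rcases List.mem_cons.mp hx with rfl | hx
          · simp; omega
          · exact hm x (by simp [hx])
  · intro p q e
    rcases split_mid e.symm with ⟨r, hu⟩ | ⟨r, hpp, hvv⟩
    · exact hp p (r ++ (a ++ (c, !s) :: b)) (by rw [hu, List.append_assoc])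
    · subst hpp
      rcases split_mid hvv.symm with ⟨r₂, har⟩ | ⟨r₃, hrr, hbb⟩
      · -- r is a prefix of a
        have hold := hp (u ++ r) (r₂ ++ (c, !s) :: b)
          (by rw [har]; simp [List.append_assoc])
        have hd : dval k t (k, s) = 0 := by simp [dval, Nat.sub_self]
        simp only [defc_append, cnt_append, defc_cons, cnt_cons, hd] at hold ⊢
        omega
      · subst hrr
        have hold := hp (u ++ (a ++ (c, !s) :: r₃)) q
          (by rw [hbb]; simp [List.append_assoc])
        have hd : dval k t (k, s) = 0 := by simp [dval, Nat.sub_self]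
        have hkey : dval k t (c - 1, !s) ≤ dval k t (c, !s) + cval (!t) (k, s) := by
          cases t <;> cases s <;> simp [dval, cval] <;> omega
        have hcv : cval (!t) ((c - 1 : ℕ), !s) = cval (!t) ((c : ℕ), !s) := rfl
        simp only [defc_append, cnt_append, defc_cons, cnt_cons, hd, hcv] at hold ⊢
        omega

lemma sound (k : ℕ) {w : List SLetter} (h : HGen k w) :
    Ok k true w ∧ Ok k false w := by
  induction h with
  | nil => exact ⟨ok_nil k true, ok_nil k false⟩
  | step _ hstep ih =>
      obtain ⟨u, v, s, rfl, rfl⟩ := hstep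
      rcases decFirst_spec (!s) v with hdf | ⟨a, c, b, hc, hv, hdf⟩
      · rw [hdf]
        exact ⟨ok_insert k true s u v ih.1, ok_insert k false s u v ih.2⟩
      · rw [hdf]
        subst hv
        exact ⟨ok_insert_dec k true s u a b c hc ih.1,
               ok_insert_dec k false s u a b c hc ih.2⟩

/-! ### completeness -/

lemma exists_lastK (k : ℕ) : ∀ w : List SLetter, (∃ x ∈ w, x.1 = k) →
    ∃ (u : List SLetter) (s : Bool) (v : List SLetter),
      w = u ++ (k, s) :: v ∧ ∀ x ∈ v, x.1 ≠ k := by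
  intro w
  induction w with
  | nil => simp
  | cons x w ih =>
      intro hx
      by_cases hw : ∃ y ∈ w, y.1 = k
      · obtain ⟨u, s, v, hwe, hv⟩ := ih hw
        exact ⟨x :: u, s, v, by rw [hwe, List.cons_append], hv⟩
      · push_neg at hw
        have hxk : x.1 = k := by
          obtain ⟨y, hy, hyk⟩ := hx
          rcases List.mem_cons.mp hy with rfl | hy
          · exact hyk
          · exact absurd hyk (hw y hy)
        refine ⟨[], x.2, w, ?_, hw⟩
        rw [← hxk]
        simp

lemma split_firstPol (s : Bool) : ∀ v : List SLetter,
    (∀ x ∈ v, x.2 = s) ∨ ∃ (a : List SLetter) (c : ℕ) (b : List SLetter),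
      v = a ++ ((c, !s) : SLetter) :: b ∧ ∀ x ∈ a, x.2 = s := by
  intro v
  induction v with
  | nil => left; simp
  | cons x v ih =>
      by_cases hx : x.2 = s
      · rcases ih with h | ⟨a, c, b, hve, ha⟩
        · left
          intro y hy
          rcases List.mem_cons.mp hy with rfl | hy
          · exact hx
          · exact h y hy
        · right
          refine ⟨x :: a, c, b, by rw [hve, List.cons_append], ?_⟩
          intro y hy
          rcases List.mem_cons.mp hy with rfl | hy
          · exact hx
          · exact ha y hy
      · right
        have hx' : x.2 = !s := by cases hb : x.2 <;> cases s <;> simp_all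
        refine ⟨[], x.1, v, ?_, by simp⟩
        rw [← hx']
        simp

lemma head_k (k : ℕ) (x : SLetter) (w : List SLetter)
    (h : Ok k x.2 (x :: w)) : x.1 = k := by
  obtain ⟨hm, hp⟩ := h
  have h1 := hp [x] w rfl
  have hd : defc k x.2 [x] = k - x.1 := by simp [dval]
  have hc : cnt (!x.2) [x] = 0 := by simp [cval]
  have hle := hm x (by simp)
  rw [hd, hc] at h1
  omega

lemma ok_remove (k : ℕ) (t s : Bool) (u v : List SLetter)
    (hv : ∀ x ∈ v, x.2 = s) (h : Ok k t (u ++ (k, s) :: v)) :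
    Ok k t (u ++ v) := by
  obtain ⟨hm, hp⟩ := h
  constructor
  · intro x hx
    rcases List.mem_append.mp hx with hx | hx
    · exact hm x (List.mem_append_left _ hx)
    · exact hm x (List.mem_append_right _ (List.mem_cons_of_mem _ hx))
  · intro p q e
    rcases List.append_eq_append_iff.mp e.symm with ⟨r, hu, _⟩ | ⟨r, hpp, hvv⟩
    · exact hp p (r ++ (k, s) :: v) (by rw [hu, List.append_assoc])
    · subst hpp
      by_cases ht : t = s
      · have hold := hp (u ++ ((k : ℕ), s) :: r) q
          (by rw [hvv]; simp [List.append_assoc])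
        have hd : dval k t ((k : ℕ), s) = 0 := by simp [dval, Nat.sub_self]
        have hc : cval (!t) ((k : ℕ), s) = 0 := by
          cases t <;> cases s <;> simp_all [cval]
        simp only [defc_append, cnt_append, defc_cons, cnt_cons, hd, hc] at hold ⊢
        omega
      · have ht' : t = !s := by cases t <;> cases s <;> simp_all
        subst ht'
        have hz : defc k (!s) r = 0 := by
          refine defc_zero_of_pol k (!s) r (fun x hx => ?_)
          have := hv x (by rw [hvv]; exact List.mem_append_left _ hx)
          simp [this]
        have hold := hp u ((k, s) :: v) rfl
        have hc : cval (!(!s)) ((k : ℕ), s) = 1 := by simp [cval]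
        simp only [defc_append, cnt_append, hz] at hold ⊢
        omega

lemma ok_put_back (k : ℕ) (t s : Bool) (u a b : List SLetter) (c : ℕ)
    (hck : c < k) (ha : ∀ x ∈ a, x.2 = s)
    (h : Ok k t (u ++ (k, s) :: (a ++ (c, !s) :: b))) :
    Ok k t (u ++ (a ++ (c + 1, !s) :: b)) := by
  obtain ⟨hm, hp⟩ := h
  constructor
  · intro x hx
    rcases List.mem_append.mp hx with hx | hx
    · exact hm x (List.mem_append_left _ hx)
    · rcases List.mem_append.mp hx with hx | hx
      · exact hm x (by simp [hx])
      · rcases List.mem_cons.mp hx with rfl | hx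
        · simpa using hck
        · exact hm x (by simp [hx])
  · intro p q e
    have e' : p ++ q = (u ++ a) ++ ((c + 1, !s) : SLetter) :: b := by
      rw [e.symm] at *
      simp [List.append_assoc]
    rcases split_mid e' with ⟨r, hur⟩ | ⟨r₃, hpp, hbb⟩
    · -- p is a prefix of u ++ a
      rcases List.append_eq_append_iff.mp hur.symm with ⟨x1, hu1, _⟩ | ⟨x1, hp1, ha1⟩
      · -- u = p ++ x1
        exact hp p (x1 ++ (k, s) :: (a ++ (c, !s) :: b)) (by rw [hu1, List.append_assoc])
      · -- p = u ++ x1, a = x1 ++ r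
        subst hp1
        by_cases ht : t = s
        · have hold := hp (u ++ ((k : ℕ), s) :: x1) (r ++ (c, !s) :: b)
            (by rw [ha1]; simp [List.append_assoc])
          have hd : dval k t ((k : ℕ), s) = 0 := by simp [dval, Nat.sub_self]
          have hc : cval (!t) ((k : ℕ), s) = 0 := by
            cases t <;> cases s <;> simp_all [cval]
          simp only [defc_append, cnt_append, defc_cons, cnt_cons, hd, hc] at hold ⊢
          omega
        · have ht' : t = !s := by cases t <;> cases s <;> simp_all
          subst ht'
          have hz : defc k (!s) x1 = 0 := by
            refine defc_zero_of_pol k (!s) x1 (fun x hx => ?_)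
            have := ha x (by rw [ha1]; exact List.mem_append_left _ hx)
            simp [this]
          have hold := hp u ((k, s) :: (a ++ (c, !s) :: b)) rfl
          simp only [defc_append, cnt_append, hz] at hold ⊢
          omega
    · -- p = (u ++ a) ++ (c+1,!s) :: r₃, b = r₃ ++ q
      subst hpp
      have hold := hp (u ++ (k, s) :: (a ++ (c, !s) :: r₃)) q
        (by rw [hbb]; simp [List.append_assoc])
      have hd : dval k t ((k : ℕ), s) = 0 := by simp [dval, Nat.sub_self]
      have hkey : dval k t ((c + 1 : ℕ), !s) + cval (!t) ((k : ℕ), s)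
          ≤ dval k t ((c : ℕ), !s) := by
        cases t <;> cases s <;> simp [dval, cval] <;> omega
      have hcv : cval (!t) ((c + 1 : ℕ), !s) = cval (!t) ((c : ℕ), !s) := rfl
      simp only [defc_append, cnt_append, defc_cons, cnt_cons, hd, hcv] at hold ⊢
      omega

lemma complete (k : ℕ) : ∀ (n : ℕ) (w : List SLetter), w.length ≤ n →
    Ok k true w → Ok k false w → HGen k w := by
  intro n
  induction n with
  | zero =>
      intro w hw _ _
      rw [List.length_eq_zero_iff.mp (Nat.le_zero.mp hw)]
      exact HGen.nil
  | succ n ih =>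
      intro w hw h1 h2
      cases w with
      | nil => exact HGen.nil
      | cons x w0 =>
          have hx : x.1 = k := by
            cases hb : x.2
            · exact head_k k x w0 (by rw [hb]; exact h2)
            · exact head_k k x w0 (by rw [hb]; exact h1)
          obtain ⟨u, s, v, hwe, hv⟩ := exists_lastK k (x :: w0) ⟨x, by simp, hx⟩
          rcases split_firstPol s v with hall | ⟨a, c, b, hve, ha⟩
          · have hdf : decFirst (!s) v = v := by
              refine decFirst_eq_self (!s) v (fun y hy hpol => ?_)
              exfalso
              have := hall y hy
              cases s <;> simp_all
            have hstep : HStep k (u ++ v) (x :: w0) :=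
              ⟨u, v, s, rfl, by rw [hwe, hdf]⟩
            have ho1 : Ok k true (u ++ v) :=
              ok_remove k true s u v hall (hwe ▸ h1)
            have ho2 : Ok k false (u ++ v) :=
              ok_remove k false s u v hall (hwe ▸ h2)
            have hlen : (u ++ v).length ≤ n := by
              have := congrArg List.length hwe
              simp only [List.length_cons, List.length_append] at this hw ⊢
              omega
            exact HGen.step (ih (u ++ v) hlen ho1 ho2) hstep
          · subst hve
            have hck : c < k := by
              have hle := (hwe ▸ h1).1 ((c : ℕ), !s) (by simp)
              have hne := hv ((c : ℕ), !s) (by simp)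
              simp only at hle hne
              omega
            have hdf : decFirst (!s) (a ++ ((c + 1 : ℕ), !s) :: b)
                = a ++ ((c : ℕ), !s) :: b := by
              rw [decFirst_append (!s) a _ (fun y hy => ?_)]
              · simp [decFirst]
              · have := ha y hy
                rintro ⟨h', -⟩
                cases s <;> simp_all
            have hstep : HStep k (u ++ (a ++ ((c + 1 : ℕ), !s) :: b)) (x :: w0) :=
              ⟨u, a ++ ((c + 1 : ℕ), !s) :: b, s, rfl, by rw [hwe, hdf]⟩
            have ho1 : Ok k true (u ++ (a ++ ((c + 1 : ℕ), !s) :: b)) :=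
              ok_put_back k true s u a b c hck ha (hwe ▸ h1)
            have ho2 : Ok k false (u ++ (a ++ ((c + 1 : ℕ), !s) :: b)) :=
              ok_put_back k false s u a b c hck ha (hwe ▸ h2)
            have hlen : (u ++ (a ++ ((c + 1 : ℕ), !s) :: b)).length ≤ n := by
              have := congrArg List.length hwe
              simp only [List.length_cons, List.length_append] at this hw ⊢
              omega
            exact HGen.step (ih _ hlen ho1 ho2) hstep

/-- The language of the signed Hammersley process of order `k` is the
intersection of two deterministic one-counter languages. -/
theorem stmt_8 (k : ℕ) (hk : 1 ≤ k) :
    ∃ L₁ L₂ : Set (List SLetter),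
      IsDOCL L₁ ∧ IsDOCL L₂ ∧ { w | HGen k w } = L₁ ∩ L₂ := by
  refine ⟨(M k true).lang, (M k false).lang, ⟨M k true, rfl⟩, ⟨M k false, rfl⟩, ?_⟩
  rw [lang_eq, lang_eq]
  ext w
  simp only [Set.mem_setOf_eq, Set.mem_inter_iff]
  constructor
  · intro h
    exact sound k h
  · rintro ⟨hA, hB⟩
    exact complete k w.length w le_rfl hA hB
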